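/- Let G be a Lie group (a group which is a finite-dimensional real smooth manifold with smooth multiplication and inversion) with a left Haar measure μ, and let π be a strongly continuous unitary representation of G on a complex Hilbert space H. Then the Gårding subspace — the linear span of the vectors ∫_G f(g) π(g)v dμ(g), where f ranges over smooth compactly supported functions on G and v over H — is dense in H. -/

import Mathlib

open MeasureTheory
open scoped Manifold

/-- let `G` be a Lie group (modelled on a finite-dimensional real normed
space `E`) with a left Haar measure `μ`, and `π` a strongly continuous unitary
representation of `G` on a complex Hilbert space `H`.  Then the Gårding subspace —
the span of the vectors `∫ f(g) π(g)v dμ(g)` with `f` smooth and compactly supported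
and `v ∈ H` — is dense in `H`. -/
theorem stmt_18 {E : Type*} [NormedAddCommGroup E] [NormedSpace ℝ E]
    [FiniteDimensional ℝ E]
    {G : Type*} [TopologicalSpace G] [ChartedSpace E G] [Group G]
    [LieGroup (modelWithCornersSelf ℝ E) (⊤ : ℕ∞) G]
    [LocallyCompactSpace G] [MeasurableSpace G] [BorelSpace G]
    (μ : Measure G) [μ.IsHaarMeasure]
    {H : Type*} [NormedAddCommGroup H] [InnerProductSpace ℂ H] [CompleteSpace H]
    (π : G →* (H →L[ℂ] H))
    (hπ_iso : ∀ (g : G) (v : H), ‖π g v‖ = ‖v‖)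
    (hπ_cont : ∀ v : H, Continuous fun g : G => π g v) :
    Dense (↑(Submodule.span ℂ
      {w : H | ∃ f : G → ℂ,
        ContMDiff (modelWithCornersSelf ℝ E) (modelWithCornersSelf ℝ ℂ) (⊤ : ℕ∞) f ∧
        HasCompactSupport f ∧
        ∃ v : H, w = ∫ g, f g • π g v ∂μ}) : Set H) := by
  haveI : IsTopologicalGroup G := topologicalGroup_of_lieGroup (I := 𝓘(ℝ, E)) (n := ((⊤ : ℕ∞) : WithTop ℕ∞))
  -- G is Hausdorff
  haveI : T2Space G := by
    apply IsTopologicalGroup.t2Space_of_one_sep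
    intro x hx
    set e := chartAt E (1 : G)
    by_cases hx1 : x ∈ e.source
    · have hne : e x ≠ e 1 := fun h => hx (e.injOn hx1 (ChartedSpace.mem_chart_source 1) h)
      have hr : 0 < dist (e x) (e 1) := dist_pos.2 hne
      refine ⟨e.source ∩ e ⁻¹' Metric.ball (e 1) (dist (e x) (e 1)), ?_, ?_⟩
      · exact (e.isOpen_inter_preimage Metric.isOpen_ball).mem_nhds
          ⟨ChartedSpace.mem_chart_source 1, by simpa using hr⟩
      · rintro ⟨-, hball⟩
        exact absurd hball (by simp [Metric.mem_ball])
    · exact ⟨e.source, e.open_source.mem_nhds (ChartedSpace.mem_chart_source 1), hx1⟩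
  rw [Metric.dense_iff]
  intro v ε hε
  -- strong continuity at 1
  have hcont : {g : G | ‖π g v - v‖ < ε / 2} ∈ nhds (1 : G) := by
    have hop : IsOpen {g : G | ‖π g v - v‖ < ε / 2} :=
      isOpen_lt ((hπ_cont v).sub continuous_const).norm continuous_const
    exact hop.mem_nhds (by simp [half_pos hε])
  obtain ⟨f, -, hfU⟩ :=
    (SmoothBumpFunction.nhds_basis_tsupport (I := 𝓘(ℝ, E)) (1 : G)).mem_iff.mp hcont
  have hf_smooth := f.contMDiff
  have hf_cs : HasCompactSupport f := f.hasCompactSupport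
  have hf_cont : Continuous f := f.continuous
  have hf_int : Integrable (⇑f) μ := hf_cont.integrable_of_hasCompactSupport hf_cs
  -- the total integral is positive
  set c : ℝ := ∫ g, f g ∂μ with hc
  have hc_pos : 0 < c := by
    rw [hc, integral_pos_iff_support_of_nonneg (fun g => f.nonneg) hf_int]
    exact f.isOpen_support.measure_pos μ f.nonempty_support
  set h : G → ℝ := fun g => c⁻¹ * f g with hh
  have hh_cs : HasCompactSupport h := hf_cs.comp_left (g := fun x : ℝ => c⁻¹ * x) (by simp)
  have hh_smooth : ContMDiff 𝓘(ℝ, E) 𝓘(ℝ) (⊤ : ℕ∞) h := contMDiff_const.mul hf_smooth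
  have hh_cont : Continuous h := hh_smooth.continuous
  have hh_nonneg : ∀ g, 0 ≤ h g := fun g => mul_nonneg (inv_nonneg.2 hc_pos.le) f.nonneg
  have hh_int : Integrable h μ := hf_int.const_mul _
  have hh_total : ∫ g, h g ∂μ = 1 := by
    rw [hh]
    rw [integral_const_mul]
    exact inv_mul_cancel₀ hc_pos.ne'
  -- the complex-valued smooth function
  set F : G → ℂ := fun g => ((h g : ℝ) : ℂ) with hF
  have hF_smooth : ContMDiff 𝓘(ℝ, E) 𝓘(ℝ, ℂ) (⊤ : ℕ∞) F :=
    (Complex.ofRealCLM.contDiff.contMDiff).comp hh_smooth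
  have hF_cs : HasCompactSupport F :=
    hh_cs.comp_left (g := fun x : ℝ => (x : ℂ)) (by simp)
  -- the candidate vector
  set w : H := ∫ g, F g • π g v ∂μ with hw
  refine ⟨w, Metric.mem_ball.2 ?_, Submodule.subset_span ⟨F, hF_smooth, hF_cs, v, hw⟩⟩
  -- F g • x = h g • x
  have hsmul : ∀ g (x : H), F g • x = h g • x := fun g x => Complex.coe_smul (h g) x
  -- integrability of the integrands
  have hπv_int : Integrable (fun g => h g • π g v) μ := by
    exact (hh_cont.smul (hπ_cont v)).integrable_of_hasCompactSupport hh_cs.smul_right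
  have hv_int : Integrable (fun g => h g • v) μ := hh_int.smul_const v
  have hw_eq : w = ∫ g, h g • π g v ∂μ := by
    have : (fun g => F g • π g v) = fun g => h g • π g v := funext fun g => hsmul g _
    rw [hw, this]
  have hv_eq : v = ∫ g, h g • v ∂μ := by
    rw [integral_smul_const, hh_total, one_smul]
  have hdiff : w - v = ∫ g, h g • (π g v - v) ∂μ := by
    have heq : ∫ g, h g • (π g v - v) ∂μ
        = (∫ g, h g • π g v ∂μ) - ∫ g, h g • v ∂μ := by
      rw [← integral_sub hπv_int hv_int]
      congr 1; ext g; rw [smul_sub]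
    rw [heq, ← hw_eq, ← hv_eq]
  -- the norm estimate
  have hbound : ‖w - v‖ ≤ ε / 2 := by
    rw [hdiff]
    have hint1 : Integrable (fun g => h g * ‖π g v - v‖) μ := by
      exact (hh_cont.mul ((hπ_cont v).sub continuous_const).norm).integrable_of_hasCompactSupport
        hh_cs.mul_right
    have hint2 : Integrable (fun g => h g * (ε / 2)) μ := hh_int.mul_const _
    calc ‖∫ g, h g • (π g v - v) ∂μ‖ ≤ ∫ g, ‖h g • (π g v - v)‖ ∂μ :=
          norm_integral_le_integral_norm _
      _ ≤ ∫ g, h g * (ε / 2) ∂μ := by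
          apply integral_mono (by simpa [norm_smul, abs_of_nonneg (hh_nonneg _)] using hint1) hint2
          intro g
          simp only [norm_smul, Real.norm_eq_abs, abs_of_nonneg (hh_nonneg g)]
          by_cases hg : g ∈ Function.support f
          · have : g ∈ tsupport f := subset_closure hg
            exact mul_le_mul_of_nonneg_left (le_of_lt (hfU this)) (hh_nonneg g)
          · have : f g = 0 := Function.notMem_support.1 hg
            simp [hh, this]
      _ = (∫ g, h g ∂μ) * (ε / 2) := integral_mul_const _ _
      _ = ε / 2 := by rw [hh_total, one_mul]
  calc dist w v = ‖w - v‖ := dist_eq_norm _ _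
    _ ≤ ε / 2 := hbound
    _ < ε := half_lt_self hε
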